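/- Let $R$ be a commutative Noetherian ring, $I=(\mu_1,\dots,\mu_u)$ and $J=(\nu_1,\dots,\nu_v)$ ideals of $R$, and suppose there is a positive integer $s$ with $s<u$, $s\le v$, such that $(\mu_1,\dots,\mu_i)\subseteq(\nu_1,\dots,\nu_i)$ for all $1\le i\le s$. Then the arithmetical rank of $I\cap J$ satisfies ara$(I\cap J)\le u+v-s-1$ if $s\le v-2$, and ara$(I\cap J)\le u$ if $v-1\le s\le v$. -/

import Mathlib

/-- Generalized Schmitt–Vogel lemma: if the generators `f t`, `t ∈ T`, are grouped by
`gr : α → ℕ` into groups `1, …, N`, and the product of any two distinct generators in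
the same group lies in the ideal generated by the generators of strictly smaller groups,
then up to radical the ideal is generated by the `N` group sums. -/
private lemma sv_lemma {R : Type*} [CommRing R] {α : Type*} [DecidableEq α]
    (T : Finset α) (f : α → R) (gr : α → ℕ) (N : ℕ)
    (hN : ∀ t ∈ T, 1 ≤ gr t ∧ gr t ≤ N)
    (hSV : ∀ t ∈ T, ∀ t' ∈ T, t ≠ t' → gr t = gr t' →
      f t * f t' ∈ Ideal.span (f '' {x : α | x ∈ T ∧ gr x < gr t})) :
    (Ideal.span (f '' ↑T)).radical =
      (Ideal.span (Set.range (fun d : Fin N =>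
        ∑ t ∈ T.filter (fun x => gr x = d.1 + 1), f t))).radical := by
  set γ : Fin N → R := fun d => ∑ t ∈ T.filter (fun x => gr x = d.1 + 1), f t with hγ
  set G := Ideal.span (Set.range γ) with hG
  have key : ∀ d : ℕ, ∀ t ∈ T, gr t = d → f t ∈ G.radical := by
    intro d
    induction d using Nat.strong_induction_on with
    | _ d ih =>
      intro t ht htd
      have h1 : 1 ≤ gr t := (hN t ht).1
      have h2 : gr t ≤ N := (hN t ht).2
      have hdN : gr t - 1 < N := by omega
      have hγd : γ ⟨gr t - 1, hdN⟩ = ∑ x ∈ T.filter (fun x => gr x = gr t), f x := by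
        have hh : (gr t - 1) + 1 = gr t := by omega
        simp only [hγ, hh]
      have htf : t ∈ T.filter (fun x => gr x = gr t) := Finset.mem_filter.mpr ⟨ht, rfl⟩
      have hsplit : γ ⟨gr t - 1, hdN⟩
          = f t + ∑ x ∈ (T.filter (fun x => gr x = gr t)).erase t, f x := by
        rw [hγd, ← Finset.add_sum_erase _ _ htf]
      have hmemG : γ ⟨gr t - 1, hdN⟩ ∈ G := Ideal.subset_span ⟨_, rfl⟩
      have h3 : f t * γ ⟨gr t - 1, hdN⟩ ∈ G.radical :=
        Ideal.mul_mem_left _ _ (Ideal.le_radical hmemG)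
      have h4 : f t * ∑ x ∈ (T.filter (fun x => gr x = gr t)).erase t, f x ∈ G.radical := by
        rw [Finset.mul_sum]
        refine Ideal.sum_mem _ fun x hx => ?_
        obtain ⟨hxne, hxmem⟩ := Finset.mem_erase.mp hx
        obtain ⟨hxT, hxgr⟩ := Finset.mem_filter.mp hxmem
        have hplow : Ideal.span (f '' {y : α | y ∈ T ∧ gr y < gr t}) ≤ G.radical := by
          rw [Ideal.span_le]
          rintro _ ⟨y, ⟨hyT, hylt⟩, rfl⟩
          exact ih (gr y) (by omega) y hyT rfl
        exact hplow (hSV t ht x hxT (Ne.symm hxne) hxgr.symm)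
      have h5 : f t * f t ∈ G.radical := by
        have heq : f t * f t = f t * γ ⟨gr t - 1, hdN⟩
            - f t * ∑ x ∈ (T.filter (fun x => gr x = gr t)).erase t, f x := by
          rw [hsplit]; ring
        rw [heq]; exact sub_mem h3 h4
      have h6 : f t ∈ G.radical.radical :=
        Ideal.mem_radical_iff.mpr ⟨2, by rwa [pow_two]⟩
      rwa [Ideal.radical_idem] at h6
  apply le_antisymm
  · have hle : Ideal.span (f '' ↑T) ≤ G.radical := by
      rw [Ideal.span_le]
      rintro _ ⟨t, ht, rfl⟩
      exact key (gr t) t ht rfl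
    calc (Ideal.span (f '' ↑T)).radical ≤ G.radical.radical := Ideal.radical_mono hle
      _ = G.radical := Ideal.radical_idem G
  · apply Ideal.radical_mono
    rw [Ideal.span_le]
    rintro _ ⟨d, rfl⟩
    exact Ideal.sum_mem _ fun x hx =>
      Ideal.subset_span ⟨x, (Finset.mem_filter.mp hx).1, rfl⟩

private lemma barile_main {R : Type*} [CommRing R]
    (u v s : ℕ) (μ ν : ℕ → R)
    (hs : 1 ≤ s) (hsu : s < u) (hsv : s ≤ v)
    (hsub : ∀ i, 1 ≤ i → i ≤ s →
      Ideal.span (μ '' Set.Icc 1 i) ≤ Ideal.span (ν '' Set.Icc 1 i))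
    (N : ℕ) (hNu : u ≤ N) (hNd : u + v - s - 1 ≤ N) :
    ∃ γ : Fin N → R,
      (Ideal.span (μ '' Set.Icc 1 u) ⊓ Ideal.span (ν '' Set.Icc 1 v)).radical
        = (Ideal.span (Set.range γ)).radical := by
  classical
  set I := Ideal.span (μ '' Set.Icc 1 u) with hI
  set J := Ideal.span (ν '' Set.Icc 1 v) with hJ
  set T : Finset (ℕ × ℕ) :=
    ((Finset.Icc (s+1) u) ×ˢ (Finset.Icc 1 v)) ∪ ((Finset.Icc 1 s) ×ˢ {0}) with hT
  set f : ℕ × ℕ → R := fun p => if p.2 = 0 then μ p.1 else μ p.1 * ν p.2 with hf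
  set gr : ℕ × ℕ → ℕ := fun p => if p.2 = 0 then u - s + p.1 else p.1 + p.2 - s - 1 with hgr
  have hmemT : ∀ p : ℕ × ℕ, p ∈ T ↔
      ((s+1 ≤ p.1 ∧ p.1 ≤ u ∧ 1 ≤ p.2 ∧ p.2 ≤ v) ∨ (1 ≤ p.1 ∧ p.1 ≤ s ∧ p.2 = 0)) := by
    intro p
    simp only [hT, Finset.mem_union, Finset.mem_product, Finset.mem_Icc,
      Finset.mem_singleton]
    tauto
  have grP : ∀ i j : ℕ, j ≠ 0 → gr (i, j) = i + j - s - 1 := by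
    intro i j hj; simp only [hgr]; exact if_neg hj
  have grZ : ∀ i : ℕ, gr (i, 0) = u - s + i := by
    intro i; simp [hgr]
  have fP : ∀ i j : ℕ, j ≠ 0 → f (i, j) = μ i * ν j := by
    intro i j hj; simp only [hf]; exact if_neg hj
  have fZ : ∀ i : ℕ, f (i, 0) = μ i := by
    intro i; simp [hf]
  have hμk : ∀ k, 1 ≤ k → k ≤ s → μ k ∈ Ideal.span (ν '' Set.Icc 1 k) := fun k h1 h2 =>
    hsub k h1 h2 (Ideal.subset_span ⟨k, Set.mem_Icc.mpr ⟨h1, le_rfl⟩, rfl⟩)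
  have hmix : ∀ k i j : ℕ, 1 ≤ k → k ≤ s → s+1 ≤ i → i ≤ u → k < j → j ≤ v →
      μ k * (μ i * ν j) ∈ Ideal.span (f '' {x : ℕ × ℕ | x ∈ T ∧ gr x < i + j - s - 1}) := by
    intro k i j hk1 hks hi1 hi2 hkj hjv
    have h := hμk k hk1 hks
    refine Submodule.span_induction (p := fun x _ => x * (μ i * ν j) ∈
      Ideal.span (f '' {x : ℕ × ℕ | x ∈ T ∧ gr x < i + j - s - 1})) ?_ ?_ ?_ ?_ h
    · intro x hx
      obtain ⟨j', hj', rfl⟩ := hx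
      rw [Set.mem_Icc] at hj'
      have hj'0 : j' ≠ 0 := by omega
      have hTmem : ((i, j') : ℕ × ℕ) ∈ T :=
        (hmemT _).mpr (Or.inl ⟨hi1, hi2, hj'.1, by omega⟩)
      have hgrlt : gr (i, j') < i + j - s - 1 := by
        rw [grP i j' hj'0]; omega
      have hmem : μ i * ν j' ∈
          Ideal.span (f '' {x : ℕ × ℕ | x ∈ T ∧ gr x < i + j - s - 1}) := by
        rw [← fP i j' hj'0]
        exact Ideal.subset_span ⟨(i, j'), ⟨hTmem, hgrlt⟩, rfl⟩
      have heq : ν j' * (μ i * ν j) = (ν j) * (μ i * ν j') := by ring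
      rw [heq]
      exact Ideal.mul_mem_left _ _ hmem
    · simp only [zero_mul]; exact Ideal.zero_mem _
    · intro x y hx hy ihx ihy
      simp only [add_mul]; exact Ideal.add_mem _ ihx ihy
    · intro r x hx ihx
      simp only [smul_eq_mul, mul_assoc]
      exact Ideal.mul_mem_left _ _ ihx
  have hN : ∀ t ∈ T, 1 ≤ gr t ∧ gr t ≤ N := by
    rintro ⟨i, j⟩ ht
    rcases (hmemT _).mp ht with ⟨h1, h2, h3, h4⟩ | ⟨h1, h2, h3⟩
    · rw [grP i j (by omega)]; omega
    · simp only at h3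
      subst h3
      rw [grZ i]; omega
  have hSV : ∀ t ∈ T, ∀ t' ∈ T, t ≠ t' → gr t = gr t' →
      f t * f t' ∈ Ideal.span (f '' {x : ℕ × ℕ | x ∈ T ∧ gr x < gr t}) := by
    rintro ⟨i, j⟩ ht ⟨i', j'⟩ ht' hne hgreq
    rcases (hmemT _).mp ht with ⟨ha1, ha2, ha3, ha4⟩ | ⟨ha1, ha2, ha3⟩ <;>
      rcases (hmemT _).mp ht' with ⟨hb1, hb2, hb3, hb4⟩ | ⟨hb1, hb2, hb3⟩
    · -- both products
      have hj : j ≠ 0 := by omega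
      have hj' : j' ≠ 0 := by omega
      rw [grP i j hj, grP i' j' hj'] at hgreq
      rw [fP i j hj, fP i' j' hj', grP i j hj]
      have hsum : i + j = i' + j' := by omega
      have hii' : i ≠ i' := by
        intro h
        subst h
        have : j = j' := by omega
        subst this
        exact hne rfl
      rcases lt_or_gt_of_ne hii' with hlt | hgt
      · have hTm : ((i, j') : ℕ × ℕ) ∈ T :=
          (hmemT _).mpr (Or.inl ⟨ha1, ha2, hb3, hb4⟩)
        have hgl : gr (i, j') < i + j - s - 1 := by
          rw [grP i j' hj']; omega
        have heq : μ i * ν j * (μ i' * ν j') = (μ i' * ν j) * (μ i * ν j') := by ring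
        rw [heq]
        refine Ideal.mul_mem_left _ _ ?_
        rw [← fP i j' hj']
        exact Ideal.subset_span ⟨(i, j'), ⟨hTm, hgl⟩, rfl⟩
      · have hTm : ((i', j) : ℕ × ℕ) ∈ T :=
          (hmemT _).mpr (Or.inl ⟨hb1, hb2, ha3, ha4⟩)
        have hgl : gr (i', j) < i + j - s - 1 := by
          rw [grP i' j hj]; omega
        have heq : μ i * ν j * (μ i' * ν j') = (μ i * ν j') * (μ i' * ν j) := by ring
        rw [heq]
        refine Ideal.mul_mem_left _ _ ?_
        rw [← fP i' j hj]
        exact Ideal.subset_span ⟨(i', j), ⟨hTm, hgl⟩, rfl⟩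
    · -- t product, t' = (i', 0)
      simp only at hb3
      subst hb3
      have hj : j ≠ 0 := by omega
      rw [grP i j hj, grZ i'] at hgreq
      rw [fP i j hj, fZ i', grP i j hj]
      have heq : μ i * ν j * μ i' = μ i' * (μ i * ν j) := by ring
      rw [heq]
      exact hmix i' i j hb1 hb2 ha1 ha2 (by omega) ha4
    · -- t = (i, 0), t' product
      simp only at ha3
      subst ha3
      have hj' : j' ≠ 0 := by omega
      rw [grZ i, grP i' j' hj'] at hgreq
      rw [fZ i, fP i' j' hj', grZ i, hgreq]
      exact hmix i i' j' ha1 ha2 hb1 hb2 (by omega) hb4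
    · -- both zero
      simp only at ha3 hb3
      subst ha3; subst hb3
      rw [grZ i, grZ i'] at hgreq
      have : i = i' := by omega
      exact absurd (by rw [this]) hne
  have hEle : Ideal.span (f '' ↑T) ≤ I ⊓ J := by
    rw [Ideal.span_le]
    rintro x ⟨p, hp, rfl⟩
    rcases (hmemT p).mp hp with ⟨h1, h2, h3, h4⟩ | ⟨h1, h2, h3⟩
    · obtain ⟨i, j⟩ := p
      simp only at h1 h2 h3 h4
      rw [fP i j (by omega)]
      refine Submodule.mem_inf.mpr ⟨?_, ?_⟩
      · exact Ideal.mul_mem_right _ _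
          (Ideal.subset_span ⟨i, Set.mem_Icc.mpr ⟨by omega, h2⟩, rfl⟩)
      · exact Ideal.mul_mem_left _ _
          (Ideal.subset_span ⟨j, Set.mem_Icc.mpr ⟨h3, h4⟩, rfl⟩)
    · obtain ⟨i, j⟩ := p
      simp only at h1 h2 h3
      subst h3
      rw [fZ i]
      refine Submodule.mem_inf.mpr ⟨?_, ?_⟩
      · exact Ideal.subset_span ⟨i, Set.mem_Icc.mpr ⟨h1, by omega⟩, rfl⟩
      · exact (Ideal.span_mono (Set.image_mono (Set.Icc_subset_Icc le_rfl (by omega))))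
          (hμk i h1 h2)
  have hsqle : (I ⊓ J) ^ 2 ≤ Ideal.span (f '' ↑T) := by
    have h1 : (I ⊓ J) ^ 2 ≤ I * J := by
      rw [pow_two]; exact Ideal.mul_mono inf_le_left inf_le_right
    refine h1.trans ?_
    rw [hI, hJ, Ideal.span_mul_span, Ideal.span_le]
    rintro x hx
    simp only [Set.mem_mul, Set.mem_iUnion, Set.mem_singleton_iff, Set.mem_image, Set.mem_Icc] at hx
    obtain ⟨a, ⟨i, ⟨hi1, hi2⟩, rfl⟩, b, ⟨j, ⟨hj1, hj2⟩, rfl⟩, rfl⟩ := hx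
    by_cases his : i ≤ s
    · have hmem : μ i ∈ Ideal.span (f '' ↑T) := by
        rw [← fZ i]
        exact Ideal.subset_span ⟨(i, 0), (hmemT _).mpr (Or.inr ⟨hi1, his, rfl⟩), rfl⟩
      exact Ideal.mul_mem_right _ _ hmem
    · have hTm : ((i, j) : ℕ × ℕ) ∈ T := (hmemT _).mpr (Or.inl ⟨by omega, hi2, hj1, hj2⟩)
      rw [← fP i j (by omega)]
      exact Ideal.subset_span ⟨(i, j), hTm, rfl⟩
  have hrad : (I ⊓ J).radical = (Ideal.span (f '' ↑T)).radical := by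
    apply le_antisymm
    · calc (I ⊓ J).radical = ((I ⊓ J) ^ 2).radical :=
            (Ideal.radical_pow (I ⊓ J) (by norm_num : (2 : ℕ) ≠ 0)).symm
        _ ≤ _ := Ideal.radical_mono hsqle
    · exact Ideal.radical_mono hEle
  refine ⟨fun d => ∑ t ∈ T.filter (fun x => gr x = d.1 + 1), f t, ?_⟩
  rw [hrad]
  exact sv_lemma T f gr N hN hSV

/-- **Corollary** (Barile). With `I = (μ 1, …, μ u)`, `J = (ν 1, …, ν v)`, `1 ≤ s < u`,
`s ≤ v`, and `(μ 1, …, μ i) ⊆ (ν 1, …, ν i)` for `1 ≤ i ≤ s`, the arithmetical rank of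
`I ∩ J` is at most `u + v - s - 1` if `s ≤ v - 2`, and at most `u` if `v - 1 ≤ s ≤ v`. -/
theorem stmt_3 {R : Type*} [CommRing R] [IsNoetherianRing R]
    (u v s : ℕ) (μ ν : ℕ → R)
    (hs : 1 ≤ s) (hsu : s < u) (hsv : s ≤ v)
    (I J : Ideal R)
    (hI : I = Ideal.span (μ '' Set.Icc 1 u)) (hJ : J = Ideal.span (ν '' Set.Icc 1 v))
    (hsub : ∀ i, 1 ≤ i → i ≤ s →
      Ideal.span (μ '' Set.Icc 1 i) ≤ Ideal.span (ν '' Set.Icc 1 i)) :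
    (s + 2 ≤ v → ∃ γ : Fin (u + v - s - 1) → R,
      (I ⊓ J).radical = (Ideal.span (Set.range γ)).radical) ∧
    (v ≤ s + 1 → ∃ γ : Fin u → R,
      (I ⊓ J).radical = (Ideal.span (Set.range γ)).radical) := by
  subst hI; subst hJ
  constructor
  · intro hv
    exact barile_main u v s μ ν hs hsu hsv hsub _ (by omega) (by omega)
  · intro hv
    exact barile_main u v s μ ν hs hsu hsv hsub _ le_rfl (by omega)
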